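/- Let F : {0,1}^{w₀} → {0,1} be a CNF of width at most r (each clause contains at most r literals), let τ ∈ {0,*}^{w₀} be a restriction with at least one *-coordinate, and let t ∈ [0,1]. Let Y be drawn from the product distribution on {0,1}^{w₀} where each coordinate is independently 1 with probability t. Then Pr[(OR_{w₀} ↾ τ)(Y) ≠ F(Y)] ≥ min{Pr[(OR ↾ τ)(Y)=0], Pr[(OR ↾ τ)(Y)=1]} − r·t, where OR_{w₀} ↾ τ denotes the OR of the variables left free by τ (all other variables fixed to 0). -/

import Mathlib

open scoped Classical BigOperators

private lemma sum_pi_prod' {ι : Type*} [Fintype ι] [DecidableEq ι] (g : ι → Bool → ℝ) :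
    (∑ f : ι → Bool, ∏ i, g i (f i)) = ∏ i, (g i true + g i false) := by
  have h := Finset.prod_univ_sum (fun _ : ι => (Finset.univ : Finset Bool)) g
  rw [Fintype.piFinset_univ] at h
  rw [← h]
  exact Finset.prod_congr rfl fun i _ => (Fintype.sum_bool (g i))

private lemma pi_total {ι : Type*} [Fintype ι] [DecidableEq ι] (t : ℝ) :
    (∑ f : ι → Bool, ∏ i, (if f i then t else 1 - t)) = 1 := by
  classical
  rw [sum_pi_prod' (fun (_ : ι) (x : Bool) => if x then t else 1 - t)]
  have h1 : ∀ i : ι, ((if (true : Bool) then t else 1 - t) + (if (false : Bool) then t else 1 - t)) = 1 := by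
    intro i; simp
  rw [Finset.prod_congr rfl fun i _ => h1 i, Finset.prod_const_one]

private lemma pi_marg {ι : Type*} [Fintype ι] [DecidableEq ι] (t : ℝ) (j : ι) :
    (∑ f : ι → Bool, (∏ i, (if f i then t else 1 - t)) * (if f j = true then 1 else 0)) = t := by
  classical
  have hterm : ∀ f : ι → Bool,
      (∏ i, (if f i then t else 1 - t)) * (if f j = true then 1 else 0)
      = ∏ i, ((if f i then t else 1 - t) * (if i = j then (if f i then (1:ℝ) else 0) else 1)) := by
    intro f
    rw [Finset.prod_mul_distrib, Finset.prod_ite_eq' Finset.univ j (fun i => if f i then (1:ℝ) else 0)]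
    simp
  simp_rw [hterm]
  rw [sum_pi_prod' (fun i (x : Bool) =>
    (if x then t else 1 - t) * (if i = j then (if x then (1:ℝ) else 0) else 1))]
  have h1 : ∀ i : ι,
      ((if (true : Bool) then t else 1 - t) * (if i = j then (if (true : Bool) then (1:ℝ) else 0) else 1)
        + (if (false : Bool) then t else 1 - t) * (if i = j then (if (false : Bool) then (1:ℝ) else 0) else 1))
      = if i = j then t else 1 := by
    intro i; by_cases h : i = j <;> simp [h]
  rw [Finset.prod_congr rfl fun i _ => h1 i, Finset.prod_ite_eq' Finset.univ j (fun _ => t)]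
  simp

private lemma pi_union {ι : Type*} [Fintype ι] [DecidableEq ι] (t : ℝ) (ht0 : 0 ≤ t) (ht1 : t ≤ 1) (T : Finset ι) :
    (∑ f : ι → Bool, (∏ i, (if f i then t else 1 - t)) * (if ∃ j ∈ T, f j = true then 1 else 0))
    ≤ (T.card : ℝ) * t := by
  classical
  have hwt0 : ∀ x : Bool, (0:ℝ) ≤ (if x then t else 1 - t) := by
    intro x; cases x
    · simpa using (by linarith : (0:ℝ) ≤ 1 - t)
    · simpa using ht0
  have hμ0 : ∀ f : ι → Bool, (0:ℝ) ≤ ∏ i, (if f i then t else 1 - t) :=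
    fun f => Finset.prod_nonneg fun i _ => hwt0 (f i)
  calc (∑ f : ι → Bool, (∏ i, (if f i then t else 1 - t)) * (if ∃ j ∈ T, f j = true then 1 else 0))
      ≤ ∑ f : ι → Bool, (∏ i, (if f i then t else 1 - t)) * (∑ j ∈ T, (if f j = true then (1:ℝ) else 0)) := by
        apply Finset.sum_le_sum
        intro f _
        apply mul_le_mul_of_nonneg_left _ (hμ0 f)
        by_cases hw : ∃ j ∈ T, f j = true
        · obtain ⟨j, hj1, hj2⟩ := hw
          rw [if_pos ⟨j, hj1, hj2⟩]
          calc (1:ℝ) = (if f j = true then (1:ℝ) else 0) := by rw [if_pos hj2]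
            _ ≤ ∑ j ∈ T, (if f j = true then (1:ℝ) else 0) :=
              Finset.single_le_sum (f := fun j => if f j = true then (1:ℝ) else 0) (fun k _ => by positivity) hj1
        · rw [if_neg hw]
          positivity
    _ = ∑ j ∈ T, ∑ f : ι → Bool, (∏ i, (if f i then t else 1 - t)) * (if f j = true then (1:ℝ) else 0) := by
        simp_rw [Finset.mul_sum]
        rw [Finset.sum_comm]
    _ = ∑ _j ∈ T, t := Finset.sum_congr rfl fun j _ => pi_marg t j
    _ = (T.card : ℝ) * t := by rw [Finset.sum_const, nsmul_eq_mul]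

private lemma sum_pi_split' {ι : Type*} [Fintype ι] [DecidableEq ι] (p : ι → Prop) [DecidablePred p]
    (F : (ι → Bool) → ℝ) :
    (∑ y : ι → Bool, F y) = ∑ a : {x // p x} → Bool, ∑ b : {x // ¬ p x} → Bool,
      F ((Equiv.piEquivPiSubtypeProd p (fun _ => Bool)).symm (a, b)) := by
  rw [← Equiv.sum_comp (Equiv.piEquivPiSubtypeProd p (fun _ => Bool)).symm F,
    Fintype.sum_prod_type]

private lemma prod_split' {ι : Type*} [Fintype ι] [DecidableEq ι] (p : ι → Prop) [DecidablePred p] (t : ℝ)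
    (a : {x // p x} → Bool) (b : {x // ¬ p x} → Bool) :
    (∏ i, if (Equiv.piEquivPiSubtypeProd p (fun _ => Bool)).symm (a, b) i then t else 1 - t)
    = (∏ j : {x // p x}, if a j then t else 1 - t) *
      (∏ j : {x // ¬ p x}, if b j then t else 1 - t) := by
  rw [← Fintype.prod_subtype_mul_prod_subtype p
    (fun i => if (Equiv.piEquivPiSubtypeProd p (fun _ => Bool)).symm (a, b) i then t else 1 - t)]
  congr 1
  · refine Finset.prod_congr rfl fun j _ => ?_
    rw [Equiv.piEquivPiSubtypeProd_symm_apply, dif_pos j.2]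
  · refine Finset.prod_congr rfl fun j _ => ?_
    rw [Equiv.piEquivPiSubtypeProd_symm_apply, dif_neg j.2]

private lemma sum_sum_mul' {A B : Type*} [Fintype A] [Fintype B] (f : A → ℝ) (g : B → ℝ) :
    ∑ a : A, ∑ b : B, f a * g b = (∑ a, f a) * (∑ b, g b) := by
  simp_rw [← Finset.mul_sum]
  rw [← Finset.sum_mul]

/-- Proposition 11.1: Let `F` be a CNF of width at most `r` on `{0,1}^{w₀}`
(given by a finite set of clauses, each a pair of a set of positive literals
and a set of negative literals of total size at most `r`), let `S` be the
nonempty set of `*`-coordinates of a restriction `τ ∈ {0,*}^{w₀}`, and let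
`Y` be `t`-biased product-distributed.  Then
`Pr[(OR ↾ τ)(Y) ≠ F(Y)] ≥ min{Pr[(OR ↾ τ)(Y) = 0], Pr[(OR ↾ τ)(Y) = 1]} − r·t`. -/
theorem stmt_5 (w₀ r : ℕ) (t : ℝ) (ht0 : 0 ≤ t) (ht1 : t ≤ 1)
    (clauses : Finset (Finset (Fin w₀) × Finset (Fin w₀)))
    (hwidth : ∀ c ∈ clauses, c.1.card + c.2.card ≤ r)
    (S : Finset (Fin w₀)) (hS : S.Nonempty) :
    (∑ y : Fin w₀ → Bool, (∏ i, if y i then t else 1 - t) *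
        (if ((∃ i ∈ S, y i = true) ↔
              (∀ c ∈ clauses, (∃ i ∈ c.1, y i = true) ∨ (∃ i ∈ c.2, y i = false)))
          then 0 else 1))
    ≥ min
        (∑ y : Fin w₀ → Bool, (∏ i, if y i then t else 1 - t) *
          (if ∃ i ∈ S, y i = true then 0 else 1))
        (∑ y : Fin w₀ → Bool, (∏ i, if y i then t else 1 - t) *
          (if ∃ i ∈ S, y i = true then 1 else 0))
      - r * t := by
  classical
  have hite01 : ∀ (P : Prop) (inst : Decidable P), (0:ℝ) ≤ @ite ℝ P inst 0 1 := by
    intro P inst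
    by_cases h : P
    · rw [if_pos h]
    · rw [if_neg h]; norm_num
  have hite10 : ∀ (P : Prop) (inst : Decidable P), (0:ℝ) ≤ @ite ℝ P inst 1 0 := by
    intro P inst
    by_cases h : P
    · rw [if_pos h]; norm_num
    · rw [if_neg h]
  set p : Fin w₀ → Prop := fun i => i ∈ S with hp
  letI iDP : DecidablePred p := fun i => Classical.propDecidable _
  letI iF1 : Fintype {x // p x} := Subtype.fintype p
  letI iF2 : Fintype {x // ¬ p x} := Subtype.fintype _
  set cmb : ({x // p x} → Bool) → ({x // ¬ p x} → Bool) → (Fin w₀ → Bool) :=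
    fun a b => (Equiv.piEquivPiSubtypeProd p (fun _ => Bool)).symm (a, b) with hcmb
  have hmem : ∀ a b (i : Fin w₀) (h : p i), cmb a b i = a ⟨i, h⟩ := by
    intro a b i h
    rw [hcmb]
    simp only [Equiv.piEquivPiSubtypeProd_symm_apply, dif_pos h]
  have hnmem : ∀ a b (i : Fin w₀) (h : ¬ p i), cmb a b i = b ⟨i, h⟩ := by
    intro a b i h
    rw [hcmb]
    simp only [Equiv.piEquivPiSubtypeProd_symm_apply, dif_neg h]
  set μα : ({x // p x} → Bool) → ℝ := fun a => ∏ j, (if a j then t else 1 - t) with hμα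
  set μβ : ({x // ¬ p x} → Bool) → ℝ := fun b => ∏ j, (if b j then t else 1 - t) with hμβ
  have hwt0 : ∀ x : Bool, (0:ℝ) ≤ (if x then t else 1 - t) := by
    intro x; cases x
    · simpa using (by linarith : (0:ℝ) ≤ 1 - t)
    · simpa using ht0
  have hμα0 : ∀ a, 0 ≤ μα a := fun a => Finset.prod_nonneg fun j _ => hwt0 (a j)
  have hμβ0 : ∀ b, 0 ≤ μβ b := fun b => Finset.prod_nonneg fun j _ => hwt0 (b j)
  have hμβsum : (∑ b, μβ b) = 1 := pi_total t
  -- events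
  set A' : ({x // p x} → Bool) → Prop := fun a => ∃ j, a j = true with hA'
  set G : ({x // ¬ p x} → Bool) → Prop := fun b =>
    ∀ c ∈ clauses, (∃ i ∈ c.1, cmb (fun _ => false) b i = true) ∨
      (∃ i ∈ c.2, cmb (fun _ => false) b i = false) with hG
  have hAiff : ∀ a b, (∃ i ∈ S, cmb a b i = true) ↔ A' a := by
    intro a b
    constructor
    · rintro ⟨i, hi, hv⟩
      exact ⟨⟨i, hi⟩, by rwa [hmem a b i hi] at hv⟩
    · rintro ⟨j, hj⟩
      exact ⟨j.1, j.2, by rw [hmem a b j.1 j.2]; exact hj⟩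
  have hzero : ∀ a b, ¬ A' a → cmb a b = cmb (fun _ => false) b := by
    intro a b ha
    have ha' : a = fun _ => false := by
      funext j
      by_contra h
      exact ha ⟨j, by simpa using h⟩
    rw [ha']
  -- choice of a failing clause
  have hchoice : ∀ b : {x // ¬ p x} → Bool, ∃ cl : Finset (Fin w₀) × Finset (Fin w₀),
      ¬ G b → (cl ∈ clauses ∧
        (∀ i ∈ cl.1, cmb (fun _ => false) b i = false) ∧
        (∀ i ∈ cl.2, cmb (fun _ => false) b i = true)) := by
    intro b
    by_cases hb : G b
    · exact ⟨(∅, ∅), fun h => absurd hb h⟩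
    · have hex : ∃ c ∈ clauses, ¬ ((∃ i ∈ c.1, cmb (fun _ => false) b i = true) ∨
          (∃ i ∈ c.2, cmb (fun _ => false) b i = false)) := by
        by_contra hcon
        push_neg at hcon
        exact hb hcon
      obtain ⟨c, hc, hns⟩ := hex
      push_neg at hns
      exact ⟨c, fun _ => ⟨hc, fun i hi => by simpa using hns.1 i hi,
        fun i hi => by simpa using hns.2 i hi⟩⟩
  choose bc hbc using hchoice
  set W : ({x // p x} → Bool) → ({x // ¬ p x} → Bool) → Prop :=
    fun a b => ∃ j : {x // p x}, (j : Fin w₀) ∈ (bc b).1 ∧ a j = true with hW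
  -- pointwise inequality
  have hpt : ∀ a b,
      (if ((∃ i ∈ S, cmb a b i = true) ↔
            (∀ c ∈ clauses, (∃ i ∈ c.1, cmb a b i = true) ∨ (∃ i ∈ c.2, cmb a b i = false)))
        then (0:ℝ) else 1)
      ≥ (if G b then (1:ℝ) else 0) * (if A' a then 0 else 1)
        + (if G b then (0:ℝ) else 1) * (if A' a then 1 else 0)
        - (if G b then (0:ℝ) else 1) * (if W a b then 1 else 0) := by
    intro a b
    by_cases hg : G b <;> by_cases ha : A' a
    · have h0 : (0:ℝ) ≤ (if ((∃ i ∈ S, cmb a b i = true) ↔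
          (∀ c ∈ clauses, (∃ i ∈ c.1, cmb a b i = true) ∨ (∃ i ∈ c.2, cmb a b i = false)))
        then (0:ℝ) else 1) := hite01 _ _
      simp only [if_pos hg, if_pos ha]
      linarith
    · have hd : ¬ ((∃ i ∈ S, cmb a b i = true) ↔
          (∀ c ∈ clauses, (∃ i ∈ c.1, cmb a b i = true) ∨ (∃ i ∈ c.2, cmb a b i = false))) := by
        intro hiff
        have hB : ∀ c ∈ clauses, (∃ i ∈ c.1, cmb a b i = true) ∨ (∃ i ∈ c.2, cmb a b i = false) := by
          rw [hzero a b ha]; exact hg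
        exact ha ((hAiff a b).mp (hiff.mpr hB))
      simp only [if_neg hd, if_pos hg, if_neg ha]
      norm_num
    · by_cases hw : W a b
      · have h0 : (0:ℝ) ≤ (if ((∃ i ∈ S, cmb a b i = true) ↔
            (∀ c ∈ clauses, (∃ i ∈ c.1, cmb a b i = true) ∨ (∃ i ∈ c.2, cmb a b i = false)))
          then (0:ℝ) else 1) := hite01 _ _
        simp only [if_neg hg, if_pos ha, if_pos hw]
        linarith
      · have hd : ¬ ((∃ i ∈ S, cmb a b i = true) ↔
            (∀ c ∈ clauses, (∃ i ∈ c.1, cmb a b i = true) ∨ (∃ i ∈ c.2, cmb a b i = false))) := by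
          intro hiff
          obtain ⟨hmemc, hfail1, hfail2⟩ := hbc b hg
          have hA : ∃ i ∈ S, cmb a b i = true := (hAiff a b).mpr ha
          have hB := hiff.mp hA (bc b) hmemc
          rcases hB with ⟨i, hi1, hi2⟩ | ⟨i, hi1, hi2⟩
          · by_cases hiS : p i
            · exact hw ⟨⟨i, hiS⟩, hi1, by rwa [hmem a b i hiS] at hi2⟩
            · have h1 := hfail1 i hi1
              rw [hnmem _ b i hiS] at h1
              rw [hnmem a b i hiS] at hi2
              rw [hi2] at h1
              exact Bool.noConfusion h1
          · have h1 := hfail2 i hi1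
            by_cases hiS : p i
            · rw [hmem _ b i hiS] at h1
              exact Bool.noConfusion h1
            · rw [hnmem _ b i hiS] at h1
              rw [hnmem a b i hiS] at hi2
              rw [hi2] at h1
              exact Bool.noConfusion h1
        simp only [if_neg hd, if_neg hg, if_pos ha, if_neg hw]
        norm_num
    · have hagree : ((∃ i ∈ S, cmb a b i = true) ↔
          (∀ c ∈ clauses, (∃ i ∈ c.1, cmb a b i = true) ∨ (∃ i ∈ c.2, cmb a b i = false))) := by
        constructor
        · intro h; exact absurd ((hAiff a b).mp h) ha
        · intro hB
          refine absurd ?_ hg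
          show ∀ c ∈ clauses, (∃ i ∈ c.1, cmb (fun _ => false) b i = true) ∨
            (∃ i ∈ c.2, cmb (fun _ => false) b i = false)
          rw [← hzero a b ha]
          exact hB
      have h0 : (0:ℝ) ≤ (if W a b then (1:ℝ) else 0) := hite10 _ _
      simp only [if_pos hagree, if_neg hg, if_neg ha]
      linarith
  -- quantities
  set q0 : ℝ := ∑ a, μα a * (if A' a then 0 else 1) with hq0
  set p0 : ℝ := ∑ a, μα a * (if A' a then 1 else 0) with hp0
  set Pg : ℝ := ∑ b, μβ b * (if G b then 1 else 0) with hPg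
  set Png : ℝ := ∑ b, μβ b * (if G b then 0 else 1) with hPng
  have hq00 : 0 ≤ q0 := Finset.sum_nonneg fun a _ => mul_nonneg (hμα0 a) (hite01 _ _)
  have hp00 : 0 ≤ p0 := Finset.sum_nonneg fun a _ => mul_nonneg (hμα0 a) (hite10 _ _)
  have hPg0 : 0 ≤ Pg := Finset.sum_nonneg fun b _ => mul_nonneg (hμβ0 b) (hite10 _ _)
  have hPng0 : 0 ≤ Png := Finset.sum_nonneg fun b _ => mul_nonneg (hμβ0 b) (hite01 _ _)
  have hPsum : Pg + Png = 1 := by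
    rw [hPg, hPng, ← Finset.sum_add_distrib]
    have h1 : ∀ b, (μβ b * (if G b then (1:ℝ) else 0) + μβ b * (if G b then (0:ℝ) else 1))
        = μβ b := by
      intro b
      by_cases h : G b
      · rw [if_pos h, if_pos h]; ring
      · rw [if_neg h, if_neg h]; ring
    rw [Finset.sum_congr rfl fun b _ => h1 b]
    exact hμβsum
  -- rewrite the three goal sums
  have hRq : (∑ y : Fin w₀ → Bool, (∏ i, if y i then t else 1 - t) *
      (if ∃ i ∈ S, y i = true then 0 else 1)) = q0 := by
    rw [sum_pi_split' p (fun y => (∏ i, if y i then t else 1 - t) *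
      (if ∃ i ∈ S, y i = true then 0 else 1))]
    have h1 : ∀ a b, (∏ i, if (Equiv.piEquivPiSubtypeProd p (fun _ => Bool)).symm (a, b) i then t else 1 - t) *
        (if ∃ i ∈ S, (Equiv.piEquivPiSubtypeProd p (fun _ => Bool)).symm (a, b) i = true then (0:ℝ) else 1)
        = (μα a * (if A' a then 0 else 1)) * μβ b := by
      intro a b
      rw [prod_split' p t a b]
      have h2 : (if ∃ i ∈ S, (Equiv.piEquivPiSubtypeProd p (fun _ => Bool)).symm (a, b) i = true then (0:ℝ) else 1)
          = (if A' a then (0:ℝ) else 1) := by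
        by_cases h : A' a
        · rw [if_pos h, if_pos ((hAiff a b).mpr h)]
        · rw [if_neg h, if_neg (fun hc => h ((hAiff a b).mp hc))]
      rw [h2]; ring
    rw [Finset.sum_congr rfl fun a _ => Finset.sum_congr rfl fun b _ => h1 a b]
    rw [sum_sum_mul' (fun a => μα a * (if A' a then (0:ℝ) else 1)) μβ, hμβsum, mul_one]
  have hRp : (∑ y : Fin w₀ → Bool, (∏ i, if y i then t else 1 - t) *
      (if ∃ i ∈ S, y i = true then 1 else 0)) = p0 := by
    rw [sum_pi_split' p (fun y => (∏ i, if y i then t else 1 - t) *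
      (if ∃ i ∈ S, y i = true then 1 else 0))]
    have h1 : ∀ a b, (∏ i, if (Equiv.piEquivPiSubtypeProd p (fun _ => Bool)).symm (a, b) i then t else 1 - t) *
        (if ∃ i ∈ S, (Equiv.piEquivPiSubtypeProd p (fun _ => Bool)).symm (a, b) i = true then (1:ℝ) else 0)
        = (μα a * (if A' a then 1 else 0)) * μβ b := by
      intro a b
      rw [prod_split' p t a b]
      have h2 : (if ∃ i ∈ S, (Equiv.piEquivPiSubtypeProd p (fun _ => Bool)).symm (a, b) i = true then (1:ℝ) else 0)
          = (if A' a then (1:ℝ) else 0) := by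
        by_cases h : A' a
        · rw [if_pos h, if_pos ((hAiff a b).mpr h)]
        · rw [if_neg h, if_neg (fun hc => h ((hAiff a b).mp hc))]
      rw [h2]; ring
    rw [Finset.sum_congr rfl fun a _ => Finset.sum_congr rfl fun b _ => h1 a b]
    rw [sum_sum_mul' (fun a => μα a * (if A' a then (1:ℝ) else 0)) μβ, hμβsum, mul_one]
  have hLHS : (∑ y : Fin w₀ → Bool, (∏ i, if y i then t else 1 - t) *
        (if ((∃ i ∈ S, y i = true) ↔
              (∀ c ∈ clauses, (∃ i ∈ c.1, y i = true) ∨ (∃ i ∈ c.2, y i = false)))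
          then 0 else 1))
      = ∑ a, ∑ b, μα a * μβ b *
        (if ((∃ i ∈ S, cmb a b i = true) ↔
              (∀ c ∈ clauses, (∃ i ∈ c.1, cmb a b i = true) ∨ (∃ i ∈ c.2, cmb a b i = false)))
          then 0 else 1) := by
    rw [sum_pi_split' p (fun y => (∏ i, if y i then t else 1 - t) *
        (if ((∃ i ∈ S, y i = true) ↔
              (∀ c ∈ clauses, (∃ i ∈ c.1, y i = true) ∨ (∃ i ∈ c.2, y i = false)))
          then 0 else 1))]
    refine Finset.sum_congr rfl fun a _ => Finset.sum_congr rfl fun b _ => ?_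
    rw [prod_split' p t a b]
  convert (?_ : (∑ a, ∑ b, μα a * μβ b *
        (if ((∃ i ∈ S, cmb a b i = true) ↔
              (∀ c ∈ clauses, (∃ i ∈ c.1, cmb a b i = true) ∨ (∃ i ∈ c.2, cmb a b i = false)))
          then (0:ℝ) else 1)) ≥ min q0 p0 - (r:ℝ) * t) using 3
  · convert hLHS
  · convert hRq
  · convert hRp
  -- lower bound via the pointwise inequality
  have hstep : (∑ a, ∑ b, μα a * μβ b *
        (if ((∃ i ∈ S, cmb a b i = true) ↔
              (∀ c ∈ clauses, (∃ i ∈ c.1, cmb a b i = true) ∨ (∃ i ∈ c.2, cmb a b i = false)))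
          then (0:ℝ) else 1))
      ≥ ∑ a, ∑ b, μα a * μβ b *
          ((if G b then (1:ℝ) else 0) * (if A' a then 0 else 1)
            + (if G b then (0:ℝ) else 1) * (if A' a then 1 else 0)
            - (if G b then (0:ℝ) else 1) * (if W a b then 1 else 0)) := by
    apply Finset.sum_le_sum
    intro a _
    apply Finset.sum_le_sum
    intro b _
    exact mul_le_mul_of_nonneg_left (hpt a b) (mul_nonneg (hμα0 a) (hμβ0 b))
  have hsplit3 : (∑ a, ∑ b, μα a * μβ b *
          ((if G b then (1:ℝ) else 0) * (if A' a then 0 else 1)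
            + (if G b then (0:ℝ) else 1) * (if A' a then 1 else 0)
            - (if G b then (0:ℝ) else 1) * (if W a b then 1 else 0)))
      = q0 * Pg + p0 * Png
        - ∑ b, (μβ b * (if G b then (0:ℝ) else 1)) * (∑ a, μα a * (if W a b then 1 else 0)) := by
    have e1 : (∑ a, ∑ b, μα a * μβ b * ((if G b then (1:ℝ) else 0) * (if A' a then 0 else 1)))
        = q0 * Pg := by
      have h : ∀ (a : {x // p x} → Bool) (b : {x // ¬ p x} → Bool),
          μα a * μβ b * ((if G b then (1:ℝ) else 0) * (if A' a then 0 else 1))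
          = (μα a * (if A' a then (0:ℝ) else 1)) * (μβ b * (if G b then (1:ℝ) else 0)) := by
        intro a b; ring
      rw [Finset.sum_congr rfl fun a _ => Finset.sum_congr rfl fun b _ => h a b]
      exact sum_sum_mul' _ _
    have e2 : (∑ a, ∑ b, μα a * μβ b * ((if G b then (0:ℝ) else 1) * (if A' a then 1 else 0)))
        = p0 * Png := by
      have h : ∀ (a : {x // p x} → Bool) (b : {x // ¬ p x} → Bool),
          μα a * μβ b * ((if G b then (0:ℝ) else 1) * (if A' a then 1 else 0))
          = (μα a * (if A' a then (1:ℝ) else 0)) * (μβ b * (if G b then (0:ℝ) else 1)) := by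
        intro a b; ring
      rw [Finset.sum_congr rfl fun a _ => Finset.sum_congr rfl fun b _ => h a b]
      exact sum_sum_mul' _ _
    have e3 : (∑ a, ∑ b, μα a * μβ b * ((if G b then (0:ℝ) else 1) * (if W a b then 1 else 0)))
        = ∑ b, (μβ b * (if G b then (0:ℝ) else 1)) * (∑ a, μα a * (if W a b then 1 else 0)) := by
      rw [Finset.sum_comm]
      refine Finset.sum_congr rfl fun b _ => ?_
      rw [Finset.mul_sum]
      refine Finset.sum_congr rfl fun a _ => ?_
      ring
    calc (∑ a, ∑ b, μα a * μβ b *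
          ((if G b then (1:ℝ) else 0) * (if A' a then 0 else 1)
            + (if G b then (0:ℝ) else 1) * (if A' a then 1 else 0)
            - (if G b then (0:ℝ) else 1) * (if W a b then 1 else 0)))
        = (∑ a, ∑ b, μα a * μβ b * ((if G b then (1:ℝ) else 0) * (if A' a then 0 else 1)))
          + (∑ a, ∑ b, μα a * μβ b * ((if G b then (0:ℝ) else 1) * (if A' a then 1 else 0)))
          - (∑ a, ∑ b, μα a * μβ b * ((if G b then (0:ℝ) else 1) * (if W a b then 1 else 0))) := by
          have hsp : ∀ (a : {x // p x} → Bool) (b : {x // ¬ p x} → Bool),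
              μα a * μβ b * ((if G b then (1:ℝ) else 0) * (if A' a then 0 else 1)
                + (if G b then (0:ℝ) else 1) * (if A' a then 1 else 0)
                - (if G b then (0:ℝ) else 1) * (if W a b then 1 else 0))
              = μα a * μβ b * ((if G b then (1:ℝ) else 0) * (if A' a then 0 else 1))
                + μα a * μβ b * ((if G b then (0:ℝ) else 1) * (if A' a then 1 else 0))
                - μα a * μβ b * ((if G b then (0:ℝ) else 1) * (if W a b then 1 else 0)) := by
            intro a b; ring
          simp_rw [hsp]
          simp_rw [Finset.sum_sub_distrib, Finset.sum_add_distrib]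
      _ = q0 * Pg + p0 * Png - _ := by rw [e1, e2, e3]
  -- bound the W-term
  have hWbound : ∀ b, (μβ b * (if G b then (0:ℝ) else 1)) * (∑ a, μα a * (if W a b then 1 else 0))
      ≤ (μβ b * (if G b then (0:ℝ) else 1)) * (r * t) := by
    intro b
    by_cases hg : G b
    · rw [if_pos hg, mul_zero, zero_mul, zero_mul]
    · apply mul_le_mul_of_nonneg_left _ (mul_nonneg (hμβ0 b) (hite01 _ _))
      obtain ⟨hmemc, -, -⟩ := hbc b hg
      set T : Finset {x // p x} := Finset.univ.filter (fun j => (j : Fin w₀) ∈ (bc b).1) with hT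
      have hTcard : T.card ≤ r := by
        have h1 : T.card ≤ (bc b).1.card := by
          refine Finset.card_le_card_of_injOn (fun j => (j : Fin w₀)) ?_ ?_
          · intro j hj
            rw [hT] at hj
            exact (Finset.mem_filter.mp hj).2
          · intro x _ y _ hxy
            exact Subtype.ext hxy
        have h2 := hwidth (bc b) hmemc
        omega
      have hiff : ∀ a, (W a b) ↔ (∃ j ∈ T, a j = true) := by
        intro a
        constructor
        · rintro ⟨j, hj1, hj2⟩
          exact ⟨j, Finset.mem_filter.mpr ⟨Finset.mem_univ j, hj1⟩, hj2⟩
        · rintro ⟨j, hj1, hj2⟩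
          exact ⟨j, (Finset.mem_filter.mp hj1).2, hj2⟩
      have h3 : (∑ a, μα a * (if W a b then (1:ℝ) else 0))
          = ∑ a, μα a * (if ∃ j ∈ T, a j = true then (1:ℝ) else 0) := by
        refine Finset.sum_congr rfl fun a _ => ?_
        congr 1
        by_cases h : W a b
        · rw [if_pos h, if_pos ((hiff a).mp h)]
        · rw [if_neg h, if_neg (fun hc => h ((hiff a).mpr hc))]
      rw [h3]
      calc (∑ a, μα a * (if ∃ j ∈ T, a j = true then (1:ℝ) else 0))
          ≤ (T.card : ℝ) * t := pi_union t ht0 ht1 T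
        _ ≤ (r : ℝ) * t := by
            apply mul_le_mul_of_nonneg_right _ ht0
            exact_mod_cast hTcard
  have hT3 : (∑ b, (μβ b * (if G b then (0:ℝ) else 1)) * (∑ a, μα a * (if W a b then 1 else 0)))
      ≤ Png * (r * t) := by
    calc (∑ b, (μβ b * (if G b then (0:ℝ) else 1)) * (∑ a, μα a * (if W a b then 1 else 0)))
        ≤ ∑ b, (μβ b * (if G b then (0:ℝ) else 1)) * (r * t) :=
          Finset.sum_le_sum fun b _ => hWbound b
      _ = Png * (r * t) := by rw [hPng, Finset.sum_mul]
  -- final arithmetic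
  have hrt : (0:ℝ) ≤ (r : ℝ) * t := by positivity
  have hm1 : min q0 p0 ≤ q0 := min_le_left _ _
  have hm2 : min q0 p0 ≤ p0 := min_le_right _ _
  have h1 : min q0 p0 * Pg ≤ q0 * Pg := mul_le_mul_of_nonneg_right hm1 hPg0
  have h2 : min q0 p0 * Png ≤ p0 * Png := mul_le_mul_of_nonneg_right hm2 hPng0
  have h3 : Png * ((r:ℝ) * t) ≤ 1 * ((r:ℝ) * t) := by
    apply mul_le_mul_of_nonneg_right _ hrt
    linarith
  have hgoal : q0 * Pg + p0 * Png
      - (∑ b, (μβ b * (if G b then (0:ℝ) else 1)) * (∑ a, μα a * (if W a b then 1 else 0)))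
      ≥ min q0 p0 - (r:ℝ) * t := by
    have h4 : min q0 p0 * Pg + min q0 p0 * Png = min q0 p0 := by
      rw [← mul_add, hPsum, mul_one]
    linarith [h1, h2, h4, hT3, h3]
  refine le_trans ?_ hstep
  rw [hsplit3]
  exact hgoal
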